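/- Let p be a prime and let F be a closed subset of ℤ_p whose topological boundary ∂F satisfies μ_p(∂F) = 0. Then the upper Banach density of F ∩ ℤ equals the Haar measure of F: d*(F ∩ ℤ) = μ_p(F). -/

import Mathlib

open MeasureTheory Filter Set Metric
open scoped ENNReal NNReal

noncomputable section

/-- Number of elements of `E` in the integer interval `(M, M+n]`. -/
def cnt (E : Set ℤ) (M : ℤ) (n : ℕ) : ℕ := (E ∩ Set.Ioc M (M + n)).ncard

/-- The `s`-counting measure `ℋ_s(E) = limsup_{|I|→∞} |E ∩ I| / |I|^s`,
where `I` ranges over integer intervals `(M, N]`. -/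
def countingMeasure (s : ℝ) (E : Set ℤ) : ℝ≥0∞ :=
  Filter.atTop.limsup fun n : ℕ => ⨆ M : ℤ, (cnt E M n : ℝ≥0∞) / (n : ℝ≥0∞) ^ s

/-- The upper Banach density `d*(E) = limsup_{|I|→∞} |E ∩ I| / |I|`. -/
def upperBanachDensity (E : Set ℤ) : ℝ≥0∞ := countingMeasure 1 E

variable (p : ℕ) [Fact p.Prime]

instance : MeasurableSpace ℤ_[p] := borel ℤ_[p]
instance : BorelSpace ℤ_[p] := ⟨rfl⟩

/-- Projection `Π_p(F) = F ∩ ℤ` of a set `F ⊆ ℤ_p`, as a set of integers. -/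
def proj (F : Set ℤ_[p]) : Set ℤ := {m : ℤ | (m : ℤ_[p]) ∈ F}

/-- The closed ball of radius `p^{-n}` around `x` in `ℤ_p`. -/
def pball (x : ℤ_[p]) (n : ℕ) : Set ℤ_[p] := Metric.closedBall x ((p : ℝ) ^ (-(n : ℤ)))

/-- `limsup_{|I|→∞} |A ∩ B ∩ I| / |B ∩ I|^s` for sets of integers `A, B`. -/
def relCount (s : ℝ) (A B : Set ℤ) : ℝ≥0∞ :=
  Filter.atTop.limsup fun n : ℕ => ⨆ M : ℤ, (cnt (A ∩ B) M n : ℝ≥0∞) / (cnt B M n : ℝ≥0∞) ^ s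

/-- `η_s(F; x, n) = limsup_{|I|→∞} |F ∩ B_{p^{-n}}(x) ∩ I| / |B_{p^{-n}}(x) ∩ I|^s`. -/
def etaN (s : ℝ) (F : Set ℤ_[p]) (x : ℤ_[p]) (n : ℕ) : ℝ≥0∞ :=
  relCount s (proj p F) (proj p (pball p x n))

/-- The `s`-counting local measure `η_s(F; x) = limsup_{n→∞} η_s(F; x, n)`. -/
def eta (s : ℝ) (F : Set ℤ_[p]) (x : ℤ_[p]) : ℝ≥0∞ :=
  Filter.atTop.limsup fun n : ℕ => etaN p s F x n

/-- `N_{p^{-n}}(F)`: minimal number of closed balls of radius `p^{-n}` covering `F`. -/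
def coverNumber (F : Set ℤ_[p]) (n : ℕ) : ℕ :=
  sInf {k : ℕ | ∃ t : Finset ℤ_[p], t.card = k ∧
    F ⊆ ⋃ x ∈ t, Metric.closedBall x ((p : ℝ) ^ (-(n : ℤ)))}

/-- Upper box-counting dimension of `F ⊆ ℤ_p`. -/
def upperBoxDim (F : Set ℤ_[p]) : ℝ :=
  Filter.atTop.limsup fun n : ℕ => Real.log (coverNumber p F n) / (n * Real.log p)

/-- Lower box-counting dimension of `F ⊆ ℤ_p`. -/
def lowerBoxDim (F : Set ℤ_[p]) : ℝ :=
  Filter.atTop.liminf fun n : ℕ => Real.log (coverNumber p F n) / (n * Real.log p)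

/-- Maximal number of points of `E` in an integer interval of length `n`. -/
def maxCnt (E : Set ℤ) (n : ℕ) : ℕ := sSup {k : ℕ | ∃ M : ℤ, cnt E M n = k}

/-- The counting dimension `D(E) = limsup_{|I|→∞} log |E ∩ I| / log |I|`. -/
def countingDim (E : Set ℤ) : ℝ :=
  Filter.atTop.limsup fun n : ℕ => Real.log (maxCnt E n) / Real.log n

/-- `θ̲*^s(F) = limsup_n min_{a ∈ G_n} ℋ^s(F ∩ B_{p^{-n}}(a)) / p^{-ns}`, where the
minimum runs over residues `a` whose ball `B_{p^{-n}}(a)` meets `F`. -/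
def thetaStar (s : ℝ) (F : Set ℤ_[p]) : ℝ≥0∞ :=
  Filter.atTop.limsup fun n : ℕ =>
    ⨅ (a : ℤ) (_ : (pball p (a : ℤ_[p]) n ∩ F).Nonempty),
      μH[s] (F ∩ pball p (a : ℤ_[p]) n) / (p : ℝ≥0∞) ^ (-((n : ℝ) * s))

/-- A finite arithmetic progression in `ℤ` with common difference `d`. -/
def IsAPWithDiff (A : Set ℤ) (d : ℤ) : Prop :=
  ∃ a : ℤ, ∃ L : ℕ, A = (fun i : ℕ => a + d * (i : ℤ)) '' {i : ℕ | i < L}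

section IntCounting

private lemma cnt_eq_card (E : Set ℤ) [DecidablePred (· ∈ E)] (M : ℤ) (n : ℕ) :
    cnt E M n = ((Finset.Ioc M (M + n)).filter (· ∈ E)).card := by
  rw [cnt, ← Set.ncard_coe_finset]
  congr 1
  ext m
  simp only [Finset.coe_filter, Finset.mem_Ioc, Set.mem_inter_iff, Set.mem_setOf_eq, Set.mem_Ioc]
  tauto

private lemma cnt_mono {E E' : Set ℤ} (h : E ⊆ E') (M : ℤ) (n : ℕ) :
    cnt E M n ≤ cnt E' M n := by
  classical
  rw [cnt_eq_card, cnt_eq_card]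
  exact Finset.card_le_card (Finset.monotone_filter_right _ (fun m _ hm => h hm))

private lemma cnt_residue (q a M : ℤ) (hq : 0 < q) (n : ℕ) :
    cnt {m : ℤ | q ∣ m - a} M n = ((M + n - a) / q - (M - a) / q).toNat := by
  classical
  rw [cnt_eq_card, ← Int.card_Ioc ((M - a)/q) ((M + n - a)/q)]
  apply Finset.card_bij (fun m _ => (m - a) / q)
  · rintro m hm
    simp only [Finset.mem_filter, Finset.mem_Ioc, Set.mem_setOf_eq] at hm
    obtain ⟨⟨h1, h2⟩, hd⟩ := hm
    have hq' : (m - a) / q * q = m - a := Int.ediv_mul_cancel hd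
    simp only [Finset.mem_Ioc]
    constructor
    · rw [Int.ediv_lt_iff_lt_mul hq, hq']; omega
    · rw [Int.le_ediv_iff_mul_le hq, hq']; omega
  · rintro m hm m' hm' hmm
    simp only [Finset.mem_filter, Finset.mem_Ioc, Set.mem_setOf_eq] at hm hm'
    have h1 : (m - a) / q * q = m - a := Int.ediv_mul_cancel hm.2
    have h2 : (m' - a) / q * q = m' - a := Int.ediv_mul_cancel hm'.2
    have h3 : (m - a) / q * q = (m' - a) / q * q := by rw [hmm]
    omega
  · rintro j hj
    simp only [Finset.mem_Ioc] at hj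
    have h1 : M - a < j * q := (Int.ediv_lt_iff_lt_mul hq).mp hj.1
    have h2 : j * q ≤ M + n - a := (Int.le_ediv_iff_mul_le hq).mp hj.2
    refine ⟨a + q * j, ?_, ?_⟩
    · simp only [Finset.mem_filter, Finset.mem_Ioc, Set.mem_setOf_eq]
      exact ⟨⟨by nlinarith, by nlinarith⟩, ⟨j, by ring⟩⟩
    · rw [add_sub_cancel_left]
      exact Int.mul_ediv_cancel_left j hq.ne'

private lemma cnt_residue_le (q : ℕ) (hq : 0 < q) (a M : ℤ) (n : ℕ) :
    cnt {m : ℤ | (q:ℤ) ∣ m - a} M n ≤ n / q + 1 := by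
  have hq' : (0:ℤ) < q := by exact_mod_cast hq
  have e := cnt_residue (q:ℤ) a M hq' n
  have ha := Int.lt_ediv_add_one_mul_self (M - a) hq'
  have hb := Int.lt_ediv_add_one_mul_self (n:ℤ) hq'
  have h1 : M + (n:ℤ) - a < ((M - a)/(q:ℤ) + (n:ℤ)/(q:ℤ) + 2) * q := by nlinarith
  have h2 := (Int.ediv_lt_iff_lt_mul hq').mpr h1
  have h3 : ((n / q : ℕ) : ℤ) = (n:ℤ) / (q:ℤ) := by exact_mod_cast Int.natCast_ediv n q
  rw [e]
  have h4 : (M + (n:ℤ) - a)/(q:ℤ) - (M - a)/(q:ℤ) ≤ ((n / q + 1 : ℕ) : ℤ) := by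
    push_cast [h3]
    omega
  exact Int.toNat_le.mpr h4

private lemma le_cnt_residue (q : ℕ) (hq : 0 < q) (a M : ℤ) (n : ℕ) :
    n / q ≤ cnt {m : ℤ | (q:ℤ) ∣ m - a} M n := by
  have hq' : (0:ℤ) < q := by exact_mod_cast hq
  have e := cnt_residue (q:ℤ) a M hq' n
  have ha : 0 ≤ (M - a) % (q:ℤ) := Int.emod_nonneg _ hq'.ne'
  have ha2 := Int.mul_ediv_add_emod (M - a) (q:ℤ)
  have hb : 0 ≤ (n:ℤ) % (q:ℤ) := Int.emod_nonneg _ hq'.ne'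
  have hb2 := Int.mul_ediv_add_emod (n:ℤ) (q:ℤ)
  have h1 : ((M - a)/(q:ℤ) + (n:ℤ)/(q:ℤ)) * q ≤ M + (n:ℤ) - a := by nlinarith
  have h2 := (Int.le_ediv_iff_mul_le hq').mpr h1
  have h3 : ((n / q : ℕ) : ℤ) = (n:ℤ) / (q:ℤ) := by exact_mod_cast Int.natCast_ediv n q
  rw [e]
  have h4 : ((n / q : ℕ) : ℤ) ≤ (M + (n:ℤ) - a)/(q:ℤ) - (M - a)/(q:ℤ) := by rw [h3]; omega
  exact (Int.le_toNat (le_trans (Int.natCast_nonneg _) h4)).mpr h4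

private lemma cnt_biUnion_le {ι : Type*} (s : Finset ι) (E : ι → Set ℤ) (M : ℤ) (n : ℕ) :
    cnt (⋃ a ∈ s, E a) M n ≤ ∑ a ∈ s, cnt (E a) M n := by
  classical
  rw [cnt_eq_card]
  calc ((Finset.Ioc M (M+n)).filter (· ∈ ⋃ a ∈ s, E a)).card
      ≤ (s.biUnion (fun a => (Finset.Ioc M (M+n)).filter (· ∈ E a))).card := by
        apply Finset.card_le_card
        intro m hm
        simp only [Finset.mem_filter, Set.mem_iUnion, exists_prop, Finset.mem_biUnion] at hm ⊢
        obtain ⟨h1, a, ha, h2⟩ := hm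
        exact ⟨a, ha, h1, h2⟩
    _ ≤ ∑ a ∈ s, ((Finset.Ioc M (M+n)).filter (· ∈ E a)).card := Finset.card_biUnion_le
    _ = ∑ a ∈ s, cnt (E a) M n := by
        refine Finset.sum_congr rfl fun a _ => ?_
        rw [cnt_eq_card]

private lemma le_cnt_biUnion {ι : Type*} (s : Finset ι) (E : ι → Set ℤ)
    (hd : ∀ a ∈ s, ∀ b ∈ s, a ≠ b → Disjoint (E a) (E b)) (M : ℤ) (n : ℕ) :
    ∑ a ∈ s, cnt (E a) M n ≤ cnt (⋃ a ∈ s, E a) M n := by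
  classical
  rw [cnt_eq_card]
  have hdf : ∀ a ∈ s, ∀ b ∈ s, a ≠ b →
      Disjoint ((Finset.Ioc M (M+n)).filter (· ∈ E a))
        ((Finset.Ioc M (M+n)).filter (· ∈ E b)) := by
    intro a ha b hb hab
    rw [Finset.disjoint_left]
    intro m hma hmb
    simp only [Finset.mem_filter] at hma hmb
    exact (hd a ha b hb hab).le_bot ⟨hma.2, hmb.2⟩
  calc ∑ a ∈ s, cnt (E a) M n
      = ∑ a ∈ s, ((Finset.Ioc M (M+n)).filter (· ∈ E a)).card := by
        refine Finset.sum_congr rfl fun a _ => ?_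
        rw [cnt_eq_card]
    _ = (s.biUnion (fun a => (Finset.Ioc M (M+n)).filter (· ∈ E a))).card :=
        (Finset.card_biUnion hdf).symm
    _ ≤ ((Finset.Ioc M (M+n)).filter (· ∈ ⋃ a ∈ s, E a)).card := by
        apply Finset.card_le_card
        intro m hm
        simp only [Finset.mem_filter, Set.mem_iUnion, exists_prop, Finset.mem_biUnion] at hm ⊢
        obtain ⟨a, ha, h1, h2⟩ := hm
        exact ⟨h1, a, ha, h2⟩

end IntCounting

section Balls
variable {p}

private lemma mem_pball {x y : ℤ_[p]} {k : ℕ} :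
    x ∈ pball p y k ↔ dist x y ≤ (p:ℝ)^(-(k:ℤ)) := Iff.rfl

private lemma mem_pball_int {a : ℕ} {m : ℤ} {k : ℕ} :
    ((m : ℤ_[p]) ∈ pball p (a : ℤ_[p]) k) ↔ ((p^k : ℕ) : ℤ) ∣ (m - a) := by
  rw [pball, Metric.mem_closedBall, dist_eq_norm,
    show ((m:ℤ_[p]) - (a:ℤ_[p])) = (((m - (a:ℤ) : ℤ)) : ℤ_[p]) by push_cast; ring]
  rw [show (((p^k : ℕ)) : ℤ) = (p:ℤ)^k by push_cast; ring]
  exact PadicInt.norm_int_le_pow_iff_dvd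

private lemma mem_pball_appr (x : ℤ_[p]) (k : ℕ) : x ∈ pball p (x.appr k : ℤ_[p]) k := by
  rw [pball, Metric.mem_closedBall, dist_eq_norm]
  exact (PadicInt.norm_le_pow_iff_mem_span_pow _ k).mpr (x.appr_spec k)

private lemma pball_radius_mono {k l : ℕ} (h : k ≤ l) (x : ℤ_[p]) :
    pball p x l ⊆ pball p x k := by
  apply Metric.closedBall_subset_closedBall
  have hp1 : (1:ℝ) ≤ p := by exact_mod_cast (Fact.out : p.Prime).one_lt.le
  exact zpow_le_zpow_right₀ hp1 (by omega)

private lemma mem_pball_self (x : ℤ_[p]) (k : ℕ) : x ∈ pball p x k := by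
  rw [pball, Metric.mem_closedBall, dist_self]
  positivity

private lemma pball_disjoint {k a b : ℕ} (ha : a < p^k) (hb : b < p^k) (hab : a ≠ b) :
    Disjoint (pball p (a:ℤ_[p]) k) (pball p (b:ℤ_[p]) k) := by
  rw [Set.disjoint_left]
  intro x hxa hxb
  rw [pball, Metric.mem_closedBall] at hxa hxb
  have hd : dist (a:ℤ_[p]) (b:ℤ_[p]) ≤ (p:ℝ)^(-(k:ℤ)) :=
    le_trans (dist_triangle_max _ x _)
      (by rw [dist_comm (a:ℤ_[p]) x]; exact max_le hxa hxb)
  have hdvd : (((p^k : ℕ)) : ℤ) ∣ ((a:ℤ) - b) := by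
    rw [dist_eq_norm,
      show ((a:ℤ_[p]) - (b:ℤ_[p])) = ((((a:ℤ) - b : ℤ)) : ℤ_[p]) by push_cast; ring] at hd
    rw [show (((p^k : ℕ)) : ℤ) = (p:ℤ)^k by push_cast; ring]
    exact PadicInt.norm_int_le_pow_iff_dvd.mp hd
  have hz : (a:ℤ) - b ≠ 0 := by
    intro h; apply hab; omega
  have hle : (((p^k : ℕ)) : ℤ) ≤ |(a:ℤ) - b| :=
    Int.le_of_dvd (abs_pos.mpr hz) ((dvd_abs _ _).mpr hdvd)
  have h1 : (a:ℤ) < ((p^k : ℕ) : ℤ) := by exact_mod_cast ha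
  have h2 : (b:ℤ) < ((p^k : ℕ) : ℤ) := by exact_mod_cast hb
  have h3 : |(a:ℤ) - b| < ((p^k : ℕ) : ℤ) := by rw [abs_lt]; omega
  omega

private lemma exists_pball (x : ℤ_[p]) (k : ℕ) :
    ∃ a : ℕ, a < p^k ∧ x ∈ pball p (a:ℤ_[p]) k :=
  ⟨x.appr k, x.appr_lt k, mem_pball_appr x k⟩

private lemma proj_pball_int (a k : ℕ) :
    proj p (pball p (a:ℤ_[p]) k) = {m : ℤ | ((p^k : ℕ) : ℤ) ∣ m - a} := by
  ext m
  simp only [proj, Set.mem_setOf_eq]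
  exact mem_pball_int

private lemma pow_small {ε : ℝ} (hε : 0 < ε) : ∃ k : ℕ, (p:ℝ)^(-(k:ℤ)) < ε := by
  have hp1 : (1:ℝ) < p := by exact_mod_cast (Fact.out : p.Prime).one_lt
  obtain ⟨k, hk⟩ := exists_pow_lt_of_lt_one hε (by
    rw [inv_lt_one_iff₀]; right; exact hp1)
  exact ⟨k, by rwa [zpow_neg, zpow_natCast, ← inv_pow]⟩

end Balls

section Meas
variable {p} (μ : Measure ℤ_[p]) [μ.IsAddHaarMeasure] [IsProbabilityMeasure μ]

private lemma measure_pball_eq (x y : ℤ_[p]) (k : ℕ) :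
    μ (pball p x k) = μ (pball p y k) := by
  have h : pball p x k = ((y - x) + ·) ⁻¹' (pball p y k) := by
    ext z
    simp only [pball, Set.mem_preimage, Metric.mem_closedBall, dist_eq_norm]
    rw [show y - x + z - y = z - x by ring]
  rw [h, measure_preimage_add]

private lemma measure_pball (k : ℕ) (x : ℤ_[p]) :
    μ (pball p x k) = ((p:ℝ≥0∞)^k)⁻¹ := by
  have hp0 : ((p:ℝ≥0∞)^k) ≠ 0 := by
    apply pow_ne_zero
    exact_mod_cast (Fact.out : p.Prime).ne_zero
  have hpt : ((p:ℝ≥0∞)^k) ≠ ⊤ := by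
    exact ENNReal.pow_ne_top (ENNReal.natCast_ne_top p)
  have hdis : ((Finset.range (p^k) : Finset ℕ) : Set ℕ).PairwiseDisjoint
      (fun a : ℕ => pball p (a:ℤ_[p]) k) := by
    intro a ha b hb hab
    exact pball_disjoint (by simpa using ha) (by simpa using hb) hab
  have hm : ∀ a ∈ Finset.range (p^k), MeasurableSet (pball p (a:ℤ_[p]) k) :=
    fun a _ => measurableSet_closedBall
  have huniv : (⋃ a ∈ Finset.range (p^k), pball p (a:ℤ_[p]) k) = Set.univ := by
    ext z
    simp only [Set.mem_iUnion, Set.mem_univ, iff_true, Finset.mem_range, exists_prop]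
    exact exists_pball z k
  have h1 : (1 : ℝ≥0∞) = ∑ a ∈ Finset.range (p^k), μ (pball p (a:ℤ_[p]) k) := by
    rw [← measure_biUnion_finset hdis hm, huniv, measure_univ]
  have h2 : ∀ a ∈ Finset.range (p^k), μ (pball p (a:ℤ_[p]) k) = μ (pball p x k) :=
    fun a _ => measure_pball_eq μ _ _ k
  rw [Finset.sum_congr rfl h2, Finset.sum_const, Finset.card_range, nsmul_eq_mul] at h1
  rw [show ((p^k : ℕ) : ℝ≥0∞) = (p:ℝ≥0∞)^k by push_cast; ring] at h1
  calc μ (pball p x k) = ((p:ℝ≥0∞)^k)⁻¹ * ((p:ℝ≥0∞)^k * μ (pball p x k)) := by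
        rw [← mul_assoc, ENNReal.inv_mul_cancel hp0 hpt, one_mul]
    _ = ((p:ℝ≥0∞)^k)⁻¹ := by rw [← h1, mul_one]

private lemma measure_biUnion_pball (k : ℕ) (s : Finset ℕ) (hs : s ⊆ Finset.range (p^k)) :
    μ (⋃ a ∈ s, pball p (a:ℤ_[p]) k) = s.card * ((p:ℝ≥0∞)^k)⁻¹ := by
  have hdis : ((s : Finset ℕ) : Set ℕ).PairwiseDisjoint
      (fun a : ℕ => pball p (a:ℤ_[p]) k) := by
    intro a ha b hb hab
    exact pball_disjoint (by simpa using hs ha) (by simpa using hs hb) hab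
  rw [measure_biUnion_finset hdis (fun a _ => measurableSet_closedBall)]
  simp [measure_pball μ k, Finset.sum_const, nsmul_eq_mul]

end Meas

section Main
variable {p}

open Classical in
private def sOut (F : Set ℤ_[p]) (k : ℕ) : Finset ℕ :=
  (Finset.range (p^k)).filter (fun a => (pball p (a:ℤ_[p]) k ∩ F).Nonempty)

open Classical in
private def sIn (F : Set ℤ_[p]) (k : ℕ) : Finset ℕ :=
  (Finset.range (p^k)).filter (fun a => pball p (a:ℤ_[p]) k ⊆ F)

private def Uo (F : Set ℤ_[p]) (k : ℕ) : Set ℤ_[p] :=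
  ⋃ a ∈ sOut F k, pball p (a:ℤ_[p]) k

private def Vi (F : Set ℤ_[p]) (k : ℕ) : Set ℤ_[p] :=
  ⋃ a ∈ sIn F k, pball p (a:ℤ_[p]) k

private lemma subset_Uo (F : Set ℤ_[p]) (k : ℕ) : F ⊆ Uo F k := by
  classical
  intro x hx
  obtain ⟨a, ha, hxa⟩ := exists_pball x k
  exact Set.mem_iUnion₂.mpr ⟨a,
    Finset.mem_filter.mpr ⟨Finset.mem_range.mpr ha, ⟨x, hxa, hx⟩⟩, hxa⟩

private lemma Vi_subset (F : Set ℤ_[p]) (k : ℕ) : Vi F k ⊆ F := by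
  classical
  intro x hx
  obtain ⟨a, ha, hxa⟩ := Set.mem_iUnion₂.mp hx
  exact (Finset.mem_filter.mp ha).2 hxa

private lemma Uo_antitone (F : Set ℤ_[p]) : Antitone (Uo F) := by
  classical
  apply antitone_nat_of_succ_le
  intro k x hx
  obtain ⟨a, ha, hxa⟩ := Set.mem_iUnion₂.mp hx
  obtain ⟨-, y, hy1, hy2⟩ := Finset.mem_filter.mp ha
  set b := x.appr k with hbdef
  have hxb : x ∈ pball p (b:ℤ_[p]) k := mem_pball_appr x k
  have hyb : y ∈ pball p (b:ℤ_[p]) k := by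
    apply mem_pball.mpr
    have h1 : dist y x ≤ (p:ℝ)^(-(k:ℤ)) := by
      refine le_trans (dist_triangle_max y ((a:ℕ):ℤ_[p]) x) (max_le ?_ ?_)
      · exact mem_pball.mp (pball_radius_mono (Nat.le_succ k) _ hy1)
      · rw [dist_comm]
        exact mem_pball.mp (pball_radius_mono (Nat.le_succ k) _ hxa)
    exact le_trans (dist_triangle_max y x ((b:ℕ):ℤ_[p])) (max_le h1 (mem_pball.mp hxb))
  exact Set.mem_iUnion₂.mpr ⟨b,
    Finset.mem_filter.mpr ⟨Finset.mem_range.mpr (x.appr_lt k), ⟨y, hyb, hy2⟩⟩, hxb⟩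

private lemma Vi_monotone (F : Set ℤ_[p]) : Monotone (Vi F) := by
  classical
  apply monotone_nat_of_le_succ
  intro k x hx
  obtain ⟨a, ha, hxa⟩ := Set.mem_iUnion₂.mp hx
  have haF : pball p ((a:ℕ):ℤ_[p]) k ⊆ F := (Finset.mem_filter.mp ha).2
  set b := x.appr (k+1) with hbdef
  have hxb : x ∈ pball p (b:ℤ_[p]) (k+1) := mem_pball_appr x (k+1)
  have hbF : pball p (b:ℤ_[p]) (k+1) ⊆ F := by
    intro z hz
    apply haF
    apply mem_pball.mpr
    have hzx : dist z x ≤ (p:ℝ)^(-(k:ℤ)) := by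
      refine le_trans (dist_triangle_max z ((b:ℕ):ℤ_[p]) x) (max_le ?_ ?_)
      · exact mem_pball.mp (pball_radius_mono (Nat.le_succ k) _ hz)
      · rw [dist_comm]
        exact mem_pball.mp (pball_radius_mono (Nat.le_succ k) _ hxb)
    exact le_trans (dist_triangle_max z x ((a:ℕ):ℤ_[p])) (max_le hzx (mem_pball.mp hxa))
  exact Set.mem_iUnion₂.mpr ⟨b,
    Finset.mem_filter.mpr ⟨Finset.mem_range.mpr (x.appr_lt (k+1)), hbF⟩, hxb⟩

private lemma iInter_Uo (F : Set ℤ_[p]) (hF : IsClosed F) : ⋂ k, Uo F k = F := by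
  classical
  apply Set.Subset.antisymm
  · intro x hx
    rw [← hF.closure_eq]
    rw [Metric.mem_closure_iff]
    intro ε hε
    obtain ⟨k, hk⟩ := pow_small (p := p) hε
    obtain ⟨a, ha, hxa⟩ := Set.mem_iUnion₂.mp (Set.mem_iInter.mp hx k)
    obtain ⟨-, y, hy1, hy2⟩ := Finset.mem_filter.mp ha
    refine ⟨y, hy2, lt_of_le_of_lt ?_ hk⟩
    refine le_trans (dist_triangle_max x ((a:ℕ):ℤ_[p]) y) (max_le (mem_pball.mp hxa) ?_)
    rw [dist_comm]; exact mem_pball.mp hy1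
  · exact fun x hx => Set.mem_iInter.mpr fun k => subset_Uo F k hx

private lemma iUnion_Vi (F : Set ℤ_[p]) : ⋃ k, Vi F k = interior F := by
  classical
  apply Set.Subset.antisymm
  · refine Set.iUnion_subset fun k => ?_
    refine Set.iUnion₂_subset fun a ha => ?_
    apply interior_maximal (Finset.mem_filter.mp ha).2
    apply IsUltrametricDist.isOpen_closedBall
    exact ne_of_gt (zpow_pos (by exact_mod_cast (Fact.out : p.Prime).pos) _)
  · intro x hx
    obtain ⟨ε, hε, hball⟩ := Metric.mem_nhds_iff.mp (mem_interior_iff_mem_nhds.mp hx)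
    obtain ⟨k, hk⟩ := pow_small (p := p) hε
    set a := x.appr k with hadef
    have hxa : x ∈ pball p (a:ℤ_[p]) k := mem_pball_appr x k
    have hsub : pball p (a:ℤ_[p]) k ⊆ F := by
      intro z hz
      apply hball
      rw [Metric.mem_ball]
      refine lt_of_le_of_lt ?_ hk
      refine le_trans (dist_triangle_max z ((a:ℕ):ℤ_[p]) x) (max_le (mem_pball.mp hz) ?_)
      rw [dist_comm]; exact mem_pball.mp hxa
    exact Set.mem_iUnion.mpr ⟨k, Set.mem_iUnion₂.mpr ⟨a,
      Finset.mem_filter.mpr ⟨Finset.mem_range.mpr (x.appr_lt k), hsub⟩, hxa⟩⟩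


private lemma measure_Uo (μ : Measure ℤ_[p]) [μ.IsAddHaarMeasure] [IsProbabilityMeasure μ]
    (F : Set ℤ_[p]) (k : ℕ) :
    μ (Uo F k) = ((sOut F k).card : ℝ≥0∞) * ((p:ℝ≥0∞)^k)⁻¹ := by
  classical
  unfold Uo
  exact measure_biUnion_pball μ k _ (by unfold sOut; exact Finset.filter_subset _ _)

private lemma measure_Vi (μ : Measure ℤ_[p]) [μ.IsAddHaarMeasure] [IsProbabilityMeasure μ]
    (F : Set ℤ_[p]) (k : ℕ) :
    μ (Vi F k) = ((sIn F k).card : ℝ≥0∞) * ((p:ℝ≥0∞)^k)⁻¹ := by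
  classical
  unfold Vi
  exact measure_biUnion_pball μ k _ (by unfold sIn; exact Finset.filter_subset _ _)

private lemma tendsto_measure_Uo (μ : Measure ℤ_[p]) [μ.IsAddHaarMeasure]
    [IsProbabilityMeasure μ] (F : Set ℤ_[p]) (hF : IsClosed F) :
    Tendsto (fun k => μ (Uo F k)) atTop (nhds (μ F)) := by
  have hmeas : ∀ k, NullMeasurableSet (Uo F k) μ := by
    intro k
    refine MeasurableSet.nullMeasurableSet (IsClosed.measurableSet ?_)
    exact (sOut F k).finite_toSet.isClosed_biUnion (fun a _ => Metric.isClosed_closedBall)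
  have h := tendsto_measure_iInter_atTop hmeas (Uo_antitone F) ⟨0, measure_ne_top μ _⟩
  rwa [iInter_Uo F hF] at h

private lemma tendsto_measure_Vi (μ : Measure ℤ_[p]) [μ.IsAddHaarMeasure]
    [IsProbabilityMeasure μ] (F : Set ℤ_[p]) (hF : IsClosed F)
    (hb : μ (frontier F) = 0) :
    Tendsto (fun k => μ (Vi F k)) atTop (nhds (μ F)) := by
  have hint : μ (interior F) = μ F := by
    apply le_antisymm (measure_mono interior_subset)
    calc μ F ≤ μ (interior F ∪ frontier F) := by
          apply measure_mono
          intro x hx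
          by_cases h : x ∈ interior F
          · exact Or.inl h
          · exact Or.inr (by rw [hF.frontier_eq]; exact ⟨hx, h⟩)
      _ ≤ μ (interior F) + μ (frontier F) := measure_union_le _ _
      _ = μ (interior F) := by rw [hb, add_zero]
  have h := tendsto_measure_iUnion_atTop (μ := μ) (Vi_monotone F)
  rwa [iUnion_Vi F, hint] at h

private lemma residue_disjoint {q : ℕ} {a b : ℕ} (ha : a < q) (hb : b < q) (hab : a ≠ b) :
    Disjoint {m : ℤ | (q:ℤ) ∣ m - (a:ℤ)} {m : ℤ | (q:ℤ) ∣ m - (b:ℤ)} := by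
  rw [Set.disjoint_left]
  rintro m hma hmb
  simp only [Set.mem_setOf_eq] at hma hmb
  apply hab
  have hdvd : (q:ℤ) ∣ (a:ℤ) - b := by
    have h5 : (a:ℤ) - b = (m - b) - (m - a) := by ring
    rw [h5]
    exact dvd_sub hmb hma
  have hz : (a:ℤ) - b ≠ 0 ∨ a = b := by omega
  rcases hz with hz | hz
  · have hle : (q:ℤ) ≤ |(a:ℤ) - b| := Int.le_of_dvd (abs_pos.mpr hz) ((dvd_abs _ _).mpr hdvd)
    have h1 : (a:ℤ) < q := by exact_mod_cast ha
    have h2 : (b:ℤ) < q := by exact_mod_cast hb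
    have h3 : |(a:ℤ) - b| < q := by rw [abs_lt]; omega
    omega
  · exact hz

private lemma cnt_le_out (F : Set ℤ_[p]) (k : ℕ) (M : ℤ) (n : ℕ) :
    cnt (proj p F) M n ≤ (sOut F k).card * (n / p^k) + (sOut F k).card := by
  classical
  have h1 : proj p F ⊆ proj p (Uo F k) := fun m hm => subset_Uo F k hm
  refine le_trans (cnt_mono h1 M n) ?_
  have h2 : proj p (Uo F k) = ⋃ a ∈ sOut F k, {m : ℤ | ((p^k : ℕ) : ℤ) ∣ m - (a:ℤ)} := by
    ext m
    simp only [proj, Uo, Set.mem_setOf_eq, Set.mem_iUnion, exists_prop]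
    exact exists_congr fun a => and_congr_right fun _ => mem_pball_int
  rw [h2]
  refine le_trans (cnt_biUnion_le _ _ M n) ?_
  have hq : 0 < p^k := pow_pos (Fact.out : p.Prime).pos k
  calc ∑ a ∈ sOut F k, cnt {m : ℤ | ((p^k : ℕ) : ℤ) ∣ m - (a:ℤ)} M n
      ≤ ∑ _a ∈ sOut F k, (n / p^k + 1) :=
        Finset.sum_le_sum fun a _ => cnt_residue_le (p^k) hq (a:ℤ) M n
    _ = (sOut F k).card * (n / p^k) + (sOut F k).card := by
        rw [Finset.sum_const, smul_eq_mul]; ring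

private lemma le_cnt_in (F : Set ℤ_[p]) (k t : ℕ) :
    (sIn F k).card * t ≤ cnt (proj p F) 0 (p^k * t) := by
  classical
  have hq : 0 < p^k := pow_pos (Fact.out : p.Prime).pos k
  have h1 : (⋃ a ∈ sIn F k, {m : ℤ | ((p^k : ℕ) : ℤ) ∣ m - (a:ℤ)}) ⊆ proj p F := by
    refine Set.iUnion₂_subset fun a ha => ?_
    intro m hm
    exact (Finset.mem_filter.mp ha).2 (mem_pball_int.mpr hm)
  refine le_trans ?_ (cnt_mono h1 0 _)
  have hd : ∀ a ∈ sIn F k, ∀ b ∈ sIn F k, a ≠ b →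
      Disjoint {m : ℤ | ((p^k : ℕ) : ℤ) ∣ m - (a:ℤ)} {m : ℤ | ((p^k : ℕ) : ℤ) ∣ m - (b:ℤ)} := by
    intro a ha b hb hab
    exact residue_disjoint (Finset.mem_range.mp ((Finset.mem_filter.mp ha).1))
      (Finset.mem_range.mp ((Finset.mem_filter.mp hb).1)) hab
  refine le_trans ?_ (le_cnt_biUnion _ _ hd 0 _)
  calc (sIn F k).card * t = ∑ _a ∈ sIn F k, t := by rw [Finset.sum_const, smul_eq_mul]
    _ ≤ ∑ a ∈ sIn F k, cnt {m : ℤ | ((p^k : ℕ) : ℤ) ∣ m - (a:ℤ)} 0 (p^k * t) := by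
        refine Finset.sum_le_sum fun a _ => ?_
        have h := le_cnt_residue (p^k) hq (a:ℤ) 0 (p^k * t)
        rwa [Nat.mul_div_cancel_left t hq] at h

private lemma nat_div_cast_le (n q : ℕ) (hq : q ≠ 0) :
    ((n / q : ℕ) : ℝ≥0∞) ≤ (n:ℝ≥0∞) / q := by
  rw [ENNReal.le_div_iff_mul_le (Or.inl (by exact_mod_cast hq))
    (Or.inl (ENNReal.natCast_ne_top q))]
  exact_mod_cast Nat.div_mul_le_self n q

private lemma key_upper (μ : Measure ℤ_[p]) [μ.IsAddHaarMeasure] [IsProbabilityMeasure μ]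
    (F : Set ℤ_[p]) (hF : IsClosed F) :
    Filter.atTop.limsup (fun n : ℕ => ⨆ M : ℤ, (cnt (proj p F) M n : ℝ≥0∞) / n) ≤ μ F := by
  apply ge_of_tendsto' (tendsto_measure_Uo μ F hF)
  intro k
  rw [measure_Uo μ F k]
  set q := p^k with hqdef
  set N := (sOut F k).card with hNdef
  have hq : 0 < q := pow_pos (Fact.out : p.Prime).pos k
  have hq0 : (q:ℝ≥0∞) ≠ 0 := Nat.cast_ne_zero.mpr hq.ne'
  have hqT : (q:ℝ≥0∞) ≠ ⊤ := ENNReal.natCast_ne_top q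
  have hcast : ((p:ℝ≥0∞)^k)⁻¹ = (q:ℝ≥0∞)⁻¹ := by
    rw [hqdef, Nat.cast_pow]
  rw [hcast]
  have hbound : ∀ᶠ n : ℕ in atTop,
      (⨆ M : ℤ, (cnt (proj p F) M n : ℝ≥0∞) / n) ≤
        (N:ℝ≥0∞) * (q:ℝ≥0∞)⁻¹ + (N:ℝ≥0∞) * (n:ℝ≥0∞)⁻¹ := by
    filter_upwards [eventually_ge_atTop 1] with n hn
    have hn0 : (n:ℝ≥0∞) ≠ 0 := Nat.cast_ne_zero.mpr (by omega)
    have hnT : (n:ℝ≥0∞) ≠ ⊤ := ENNReal.natCast_ne_top n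
    apply iSup_le
    intro M
    have hc : (cnt (proj p F) M n : ℝ≥0∞) ≤ (N:ℝ≥0∞) * ((n / q : ℕ) : ℝ≥0∞) + N := by
      exact_mod_cast cnt_le_out F k M n
    have hnd : ((n / q : ℕ) : ℝ≥0∞) ≤ (n:ℝ≥0∞) / q := nat_div_cast_le n q hq.ne'
    calc (cnt (proj p F) M n : ℝ≥0∞) / n
        ≤ ((N:ℝ≥0∞) * ((n:ℝ≥0∞) / q) + N) / n := by
          apply ENNReal.div_le_div_right
          refine le_trans hc ?_
          gcongr
      _ = (N:ℝ≥0∞) * ((n:ℝ≥0∞) / q) / n + (N:ℝ≥0∞) / n := ENNReal.add_div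
      _ = (N:ℝ≥0∞) * (q:ℝ≥0∞)⁻¹ * ((n:ℝ≥0∞) * (n:ℝ≥0∞)⁻¹) + (N:ℝ≥0∞) * (n:ℝ≥0∞)⁻¹ := by
          rw [div_eq_mul_inv, div_eq_mul_inv, div_eq_mul_inv]; ring
      _ = (N:ℝ≥0∞) * (q:ℝ≥0∞)⁻¹ + (N:ℝ≥0∞) * (n:ℝ≥0∞)⁻¹ := by
          rw [ENNReal.mul_inv_cancel hn0 hnT, mul_one]
  have hg : Tendsto (fun n : ℕ => (N:ℝ≥0∞) * (q:ℝ≥0∞)⁻¹ + (N:ℝ≥0∞) * (n:ℝ≥0∞)⁻¹)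
      atTop (nhds ((N:ℝ≥0∞) * (q:ℝ≥0∞)⁻¹)) := by
    have h0 : Tendsto (fun n : ℕ => (N:ℝ≥0∞) * (n:ℝ≥0∞)⁻¹) atTop (nhds 0) := by
      have h := ENNReal.Tendsto.const_mul (a := (N:ℝ≥0∞))
        ENNReal.tendsto_inv_nat_nhds_zero (Or.inr (ENNReal.natCast_ne_top N))
      simpa using h
    simpa using tendsto_const_nhds.add h0
  calc Filter.atTop.limsup (fun n : ℕ => ⨆ M : ℤ, (cnt (proj p F) M n : ℝ≥0∞) / n)
      ≤ Filter.atTop.limsup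
          (fun n : ℕ => (N:ℝ≥0∞) * (q:ℝ≥0∞)⁻¹ + (N:ℝ≥0∞) * (n:ℝ≥0∞)⁻¹) :=
        limsup_le_limsup hbound
    _ = (N:ℝ≥0∞) * (q:ℝ≥0∞)⁻¹ := hg.limsup_eq

private lemma key_lower (μ : Measure ℤ_[p]) [μ.IsAddHaarMeasure] [IsProbabilityMeasure μ]
    (F : Set ℤ_[p]) (hF : IsClosed F) (hb : μ (frontier F) = 0) :
    μ F ≤ Filter.atTop.limsup (fun n : ℕ => ⨆ M : ℤ, (cnt (proj p F) M n : ℝ≥0∞) / n) := by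
  apply le_of_tendsto' (tendsto_measure_Vi μ F hF hb)
  intro k
  rw [measure_Vi μ F k]
  set q := p^k with hqdef
  set N := (sIn F k).card with hNdef
  have hq : 0 < q := pow_pos (Fact.out : p.Prime).pos k
  have hq0 : (q:ℝ≥0∞) ≠ 0 := Nat.cast_ne_zero.mpr hq.ne'
  have hqT : (q:ℝ≥0∞) ≠ ⊤ := ENNReal.natCast_ne_top q
  have hcast : ((p:ℝ≥0∞)^k)⁻¹ = (q:ℝ≥0∞)⁻¹ := by
    rw [hqdef, Nat.cast_pow]
  rw [hcast]
  apply Filter.le_limsup_of_frequently_le'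
  rw [Filter.frequently_atTop]
  intro m
  refine ⟨q * (m+1), ?_, ?_⟩
  · calc m ≤ m + 1 := Nat.le_succ m
      _ ≤ q * (m+1) := Nat.le_mul_of_pos_left _ hq
  · set t := m + 1 with htdef
    have ht0 : (t:ℝ≥0∞) ≠ 0 := by simp [htdef]
    have htT : (t:ℝ≥0∞) ≠ ⊤ := ENNReal.natCast_ne_top t
    have h1 : (N * t : ℕ) ≤ cnt (proj p F) 0 (q * t) := le_cnt_in F k t
    have h2 : ((N * t : ℕ) : ℝ≥0∞) / ((q * t : ℕ) : ℝ≥0∞) ≤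
        ⨆ M : ℤ, (cnt (proj p F) M (q * t) : ℝ≥0∞) / ((q * t : ℕ) : ℝ≥0∞) := by
      refine le_trans ?_ (le_iSup _ (0:ℤ))
      apply ENNReal.div_le_div_right
      exact_mod_cast h1
    refine le_trans ?_ h2
    rw [Nat.cast_mul, Nat.cast_mul, ENNReal.mul_div_mul_right _ _ ht0 htT, div_eq_mul_inv]


end Main

/-- If `F ⊆ ℤ_p` is closed and its boundary has Haar measure zero, then
`d*(F ∩ ℤ) = μ_p(F)`. -/
theorem banachDensity_eq_haar (F : Set ℤ_[p]) (hF : IsClosed F)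
    (μ : Measure ℤ_[p]) [μ.IsAddHaarMeasure] [IsProbabilityMeasure μ]
    (hb : μ (frontier F) = 0) :
    upperBanachDensity (proj p F) = μ F := by
  have hlim : upperBanachDensity (proj p F) =
      Filter.atTop.limsup (fun n : ℕ => ⨆ M : ℤ, (cnt (proj p F) M n : ℝ≥0∞) / n) := by
    rw [upperBanachDensity, countingMeasure]
    congr 1
    funext n
    congr 1
    funext M
    rw [ENNReal.rpow_one]
  rw [hlim]
  exact le_antisymm (key_upper μ F hF) (key_lower μ F hF hb)

end
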